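/- Every 4-coloring of Z_8 in which each color class has exactly 2 elements contains a rainbow 4-term arithmetic progression, i.e., there exist x ∈ Z_8 and d ∈ Z_8 with d ≠ 0 such that x, x+d, x+2d, x+3d are four distinct elements of Z_8 receiving four distinct colors. -/

import Mathlib

inductive Color | A | B | C | D
  deriving DecidableEq

open Color

/-- The four terms `x, x+d, x+2d, x+3d` are pairwise distinct in `ZMod 8`. -/
def Distinct4 (x d : ZMod 8) : Prop :=
  x ≠ x + d ∧ x ≠ x + 2*d ∧ x ≠ x + 3*d ∧
  x + d ≠ x + 2*d ∧ x + d ≠ x + 3*d ∧ x + 2*d ≠ x + 3*d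

/-- The colors of `x, x+d, x+2d, x+3d` are pairwise distinct. -/
def RainbowColors (c : ZMod 8 → Color) (x d : ZMod 8) : Prop :=
  c x ≠ c (x + d) ∧ c x ≠ c (x + 2*d) ∧ c x ≠ c (x + 3*d) ∧
  c (x + d) ≠ c (x + 2*d) ∧ c (x + d) ≠ c (x + 3*d) ∧ c (x + 2*d) ≠ c (x + 3*d)

instance : Fintype Color := ⟨{A,B,C,D}, by intro x; cases x <;> simp⟩

instance (x d : ZMod 8) : Decidable (Distinct4 x d) := by
  unfold Distinct4; infer_instance

def good8 (a0 a1 a2 a3 a4 a5 a6 a7 : Color) : Bool :=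
  (a0 != a1 && (a0 != a2 && (a0 != a3 && (a1 != a2 && (a1 != a3 && a2 != a3))))) || ((a1 != a2 && (a1 != a3 && (a1 != a4 && (a2 != a3 && (a2 != a4 && a3 != a4))))) || ((a2 != a3 && (a2 != a4 && (a2 != a5 && (a3 != a4 && (a3 != a5 && a4 != a5))))) || ((a3 != a4 && (a3 != a5 && (a3 != a6 && (a4 != a5 && (a4 != a6 && a5 != a6))))) || ((a4 != a5 && (a4 != a6 && (a4 != a7 && (a5 != a6 && (a5 != a7 && a6 != a7))))) || ((a5 != a6 && (a5 != a7 && (a5 != a0 && (a6 != a7 && (a6 != a0 && a7 != a0))))) || ((a6 != a7 && (a6 != a0 && (a6 != a1 && (a7 != a0 && (a7 != a1 && a0 != a1))))) || ((a7 != a0 && (a7 != a1 && (a7 != a2 && (a0 != a1 && (a0 != a2 && a1 != a2))))) || ((a0 != a2 && (a0 != a4 && (a0 != a6 && (a2 != a4 && (a2 != a6 && a4 != a6))))) || ((a1 != a3 && (a1 != a5 && (a1 != a7 && (a3 != a5 && (a3 != a7 && a5 != a7))))) || ((a2 != a4 && (a2 != a6 && (a2 != a0 && (a4 != a6 && (a4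 != a0 && a6 != a0))))) || ((a3 != a5 && (a3 != a7 && (a3 != a1 && (a5 != a7 && (a5 != a1 && a7 != a1))))) || ((a4 != a6 && (a4 != a0 && (a4 != a2 && (a6 != a0 && (a6 != a2 && a0 != a2))))) || ((a5 != a7 && (a5 != a1 && (a5 != a3 && (a7 != a1 && (a7 != a3 && a1 != a3))))) || ((a6 != a0 && (a6 != a2 && (a6 != a4 && (a0 != a2 && (a0 != a4 && a2 != a4))))) || ((a7 != a1 && (a7 != a3 && (a7 != a5 && (a1 != a3 && (a1 != a5 && a3 != a5))))) || ((a0 != a3 && (a0 != a6 && (a0 != a1 && (a3 != a6 && (a3 != a1 && a6 != a1))))) || ((a1 != a4 && (a1 != a7 && (a1 != a2 && (a4 != a7 && (a4 != a2 && a7 != a2))))) || ((a2 != a5 && (a2 != a0 && (a2 != a3 && (a5 != a0 && (a5 != a3 && a0 != a3))))) || ((a3 != a6 && (a3 != a1 && (a3 != a4 && (a6 != a1 && (a6 != a4 && a1 != a4))))) || ((a4 != a7 && (a4 != a2 && (a4 != a5 && (a7 != a2 && (a7 != a5 && a2 != a5))))) || ((a5 != a0 && (a5 != a3 && (a5 !=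 a6 && (a0 != a3 && (a0 != a6 && a3 != a6))))) || ((a6 != a1 && (a6 != a4 && (a6 != a7 && (a1 != a4 && (a1 != a7 && a4 != a7))))) || ((a7 != a2 && (a7 != a5 && (a7 != a0 && (a2 != a5 && (a2 != a0 && a5 != a0))))))))))))))))))))))))))))

def cl (l : List Color) (x : Color) : Nat := l.countP (fun y => y == x)

set_option maxRecDepth 100000 in
set_option maxHeartbeats 40000000 in
theorem key8 : ∀ a0 : Color, a0 = A → ∀ a1 a2 a3 a4 a5 a6 a7 : Color,
    cl [a0,a1,a2,a3,a4,a5,a6,a7] A = 2 → cl [a0,a1,a2,a3,a4,a5,a6,a7] B = 2 →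
    cl [a0,a1,a2,a3,a4,a5,a6,a7] C = 2 → cl [a0,a1,a2,a3,a4,a5,a6,a7] D = 2 →
    good8 a0 a1 a2 a3 a4 a5 a6 a7 = true := by
  decide

theorem stmt_13 (c : ZMod 8 → Color)
    (hc : ∀ x : Color, (Finset.univ.filter (fun i : ZMod 8 => c i = x)).card = 2) :
    ∃ x d : ZMod 8, d ≠ 0 ∧ Distinct4 x d ∧ RainbowColors c x d := by
  have hcnt : ∀ x : Color, cl [c 0, c 1, c 2, c 3, c 4, c 5, c 6, c 7] x = 2 := by
    intro x
    have e : (List.finRange 8).countP (fun i => decide (c i = x)) =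
        (Finset.univ.filter (fun i : ZMod 8 => c i = x)).card := by
      refine (List.countP_eq_length_filter (l := List.finRange 8) (p := fun i : Fin 8 => decide (c i = x))).trans ?_
      rfl
    exact e.trans (hc x)
  set σ : Equiv.Perm Color := Equiv.swap A (c 0) with hσ
  have hswap : ∀ y x : Color, (σ y == x) = (y == σ x) := by
    intro y x
    rw [Bool.eq_iff_iff]
    simp only [beq_iff_eq]
    constructor
    · rintro rfl; rw [Equiv.swap_apply_self]
    · rintro rfl; rw [Equiv.swap_apply_self]
  have hcnt2 : ∀ x : Color, cl [σ (c 0), σ (c 1), σ (c 2), σ (c 3), σ (c 4), σ (c 5), σ (c 6), σ (c 7)] x = 2 := by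
    intro x
    have : cl [σ (c 0), σ (c 1), σ (c 2), σ (c 3), σ (c 4), σ (c 5), σ (c 6), σ (c 7)] x
        = cl [c 0, c 1, c 2, c 3, c 4, c 5, c 6, c 7] (σ x) := by
      simp only [cl, List.countP_cons, List.countP_nil, hswap]
    rw [this]
    exact hcnt (σ x)
  have h0 : σ (c 0) = A := Equiv.swap_apply_right _ _
  have hg := key8 (σ (c 0)) h0 (σ (c 1)) (σ (c 2)) (σ (c 3)) (σ (c 4)) (σ (c 5)) (σ (c 6)) (σ (c 7))
    (hcnt2 A) (hcnt2 B) (hcnt2 C) (hcnt2 D)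
  unfold good8 at hg
  simp only [Bool.or_eq_true, Bool.and_eq_true, bne_iff_ne, ne_eq] at hg
  obtain h|h|h|h|h|h|h|h|h|h|h|h|h|h|h|h|h|h|h|h|h|h|h|h := hg
  · exact ⟨0, 1, by decide, by decide, (σ.injective.ne_iff).mp h.1, (σ.injective.ne_iff).mp h.2.1, (σ.injective.ne_iff).mp h.2.2.1, (σ.injective.ne_iff).mp h.2.2.2.1, (σ.injective.ne_iff).mp h.2.2.2.2.1, (σ.injective.ne_iff).mp h.2.2.2.2.2⟩
  · exact ⟨1, 1, by decide, by decide, (σ.injective.ne_iff).mp h.1, (σ.injective.ne_iff).mp h.2.1, (σ.injective.ne_iff).mp h.2.2.1, (σ.injective.ne_iff).mp h.2.2.2.1, (σ.injective.ne_iff).mp h.2.2.2.2.1, (σ.injective.ne_iff).mp h.2.2.2.2.2⟩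
  · exact ⟨2, 1, by decide, by decide, (σ.injective.ne_iff).mp h.1, (σ.injective.ne_iff).mp h.2.1, (σ.injective.ne_iff).mp h.2.2.1, (σ.injective.ne_iff).mp h.2.2.2.1, (σ.injective.ne_iff).mp h.2.2.2.2.1, (σ.injective.ne_iff).mp h.2.2.2.2.2⟩
  · exact ⟨3, 1, by decide, by decide, (σ.injective.ne_iff).mp h.1, (σ.injective.ne_iff).mp h.2.1, (σ.injective.ne_iff).mp h.2.2.1, (σ.injective.ne_iff).mp h.2.2.2.1, (σ.injective.ne_iff).mp h.2.2.2.2.1, (σ.injective.ne_iff).mp h.2.2.2.2.2⟩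
  · exact ⟨4, 1, by decide, by decide, (σ.injective.ne_iff).mp h.1, (σ.injective.ne_iff).mp h.2.1, (σ.injective.ne_iff).mp h.2.2.1, (σ.injective.ne_iff).mp h.2.2.2.1, (σ.injective.ne_iff).mp h.2.2.2.2.1, (σ.injective.ne_iff).mp h.2.2.2.2.2⟩
  · exact ⟨5, 1, by decide, by decide, (σ.injective.ne_iff).mp h.1, (σ.injective.ne_iff).mp h.2.1, (σ.injective.ne_iff).mp h.2.2.1, (σ.injective.ne_iff).mp h.2.2.2.1, (σ.injective.ne_iff).mp h.2.2.2.2.1, (σ.injective.ne_iff).mp h.2.2.2.2.2⟩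
  · exact ⟨6, 1, by decide, by decide, (σ.injective.ne_iff).mp h.1, (σ.injective.ne_iff).mp h.2.1, (σ.injective.ne_iff).mp h.2.2.1, (σ.injective.ne_iff).mp h.2.2.2.1, (σ.injective.ne_iff).mp h.2.2.2.2.1, (σ.injective.ne_iff).mp h.2.2.2.2.2⟩
  · exact ⟨7, 1, by decide, by decide, (σ.injective.ne_iff).mp h.1, (σ.injective.ne_iff).mp h.2.1, (σ.injective.ne_iff).mp h.2.2.1, (σ.injective.ne_iff).mp h.2.2.2.1, (σ.injective.ne_iff).mp h.2.2.2.2.1, (σ.injective.ne_iff).mp h.2.2.2.2.2⟩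
  · exact ⟨0, 2, by decide, by decide, (σ.injective.ne_iff).mp h.1, (σ.injective.ne_iff).mp h.2.1, (σ.injective.ne_iff).mp h.2.2.1, (σ.injective.ne_iff).mp h.2.2.2.1, (σ.injective.ne_iff).mp h.2.2.2.2.1, (σ.injective.ne_iff).mp h.2.2.2.2.2⟩
  · exact ⟨1, 2, by decide, by decide, (σ.injective.ne_iff).mp h.1, (σ.injective.ne_iff).mp h.2.1, (σ.injective.ne_iff).mp h.2.2.1, (σ.injective.ne_iff).mp h.2.2.2.1, (σ.injective.ne_iff).mp h.2.2.2.2.1, (σ.injective.ne_iff).mp h.2.2.2.2.2⟩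
  · exact ⟨2, 2, by decide, by decide, (σ.injective.ne_iff).mp h.1, (σ.injective.ne_iff).mp h.2.1, (σ.injective.ne_iff).mp h.2.2.1, (σ.injective.ne_iff).mp h.2.2.2.1, (σ.injective.ne_iff).mp h.2.2.2.2.1, (σ.injective.ne_iff).mp h.2.2.2.2.2⟩
  · exact ⟨3, 2, by decide, by decide, (σ.injective.ne_iff).mp h.1, (σ.injective.ne_iff).mp h.2.1, (σ.injective.ne_iff).mp h.2.2.1, (σ.injective.ne_iff).mp h.2.2.2.1, (σ.injective.ne_iff).mp h.2.2.2.2.1, (σ.injective.ne_iff).mp h.2.2.2.2.2⟩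
  · exact ⟨4, 2, by decide, by decide, (σ.injective.ne_iff).mp h.1, (σ.injective.ne_iff).mp h.2.1, (σ.injective.ne_iff).mp h.2.2.1, (σ.injective.ne_iff).mp h.2.2.2.1, (σ.injective.ne_iff).mp h.2.2.2.2.1, (σ.injective.ne_iff).mp h.2.2.2.2.2⟩
  · exact ⟨5, 2, by decide, by decide, (σ.injective.ne_iff).mp h.1, (σ.injective.ne_iff).mp h.2.1, (σ.injective.ne_iff).mp h.2.2.1, (σ.injective.ne_iff).mp h.2.2.2.1, (σ.injective.ne_iff).mp h.2.2.2.2.1, (σ.injective.ne_iff).mp h.2.2.2.2.2⟩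
  · exact ⟨6, 2, by decide, by decide, (σ.injective.ne_iff).mp h.1, (σ.injective.ne_iff).mp h.2.1, (σ.injective.ne_iff).mp h.2.2.1, (σ.injective.ne_iff).mp h.2.2.2.1, (σ.injective.ne_iff).mp h.2.2.2.2.1, (σ.injective.ne_iff).mp h.2.2.2.2.2⟩
  · exact ⟨7, 2, by decide, by decide, (σ.injective.ne_iff).mp h.1, (σ.injective.ne_iff).mp h.2.1, (σ.injective.ne_iff).mp h.2.2.1, (σ.injective.ne_iff).mp h.2.2.2.1, (σ.injective.ne_iff).mp h.2.2.2.2.1, (σ.injective.ne_iff).mp h.2.2.2.2.2⟩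
  · exact ⟨0, 3, by decide, by decide, (σ.injective.ne_iff).mp h.1, (σ.injective.ne_iff).mp h.2.1, (σ.injective.ne_iff).mp h.2.2.1, (σ.injective.ne_iff).mp h.2.2.2.1, (σ.injective.ne_iff).mp h.2.2.2.2.1, (σ.injective.ne_iff).mp h.2.2.2.2.2⟩
  · exact ⟨1, 3, by decide, by decide, (σ.injective.ne_iff).mp h.1, (σ.injective.ne_iff).mp h.2.1, (σ.injective.ne_iff).mp h.2.2.1, (σ.injective.ne_iff).mp h.2.2.2.1, (σ.injective.ne_iff).mp h.2.2.2.2.1, (σ.injective.ne_iff).mp h.2.2.2.2.2⟩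
  · exact ⟨2, 3, by decide, by decide, (σ.injective.ne_iff).mp h.1, (σ.injective.ne_iff).mp h.2.1, (σ.injective.ne_iff).mp h.2.2.1, (σ.injective.ne_iff).mp h.2.2.2.1, (σ.injective.ne_iff).mp h.2.2.2.2.1, (σ.injective.ne_iff).mp h.2.2.2.2.2⟩
  · exact ⟨3, 3, by decide, by decide, (σ.injective.ne_iff).mp h.1, (σ.injective.ne_iff).mp h.2.1, (σ.injective.ne_iff).mp h.2.2.1, (σ.injective.ne_iff).mp h.2.2.2.1, (σ.injective.ne_iff).mp h.2.2.2.2.1, (σ.injective.ne_iff).mp h.2.2.2.2.2⟩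
  · exact ⟨4, 3, by decide, by decide, (σ.injective.ne_iff).mp h.1, (σ.injective.ne_iff).mp h.2.1, (σ.injective.ne_iff).mp h.2.2.1, (σ.injective.ne_iff).mp h.2.2.2.1, (σ.injective.ne_iff).mp h.2.2.2.2.1, (σ.injective.ne_iff).mp h.2.2.2.2.2⟩
  · exact ⟨5, 3, by decide, by decide, (σ.injective.ne_iff).mp h.1, (σ.injective.ne_iff).mp h.2.1, (σ.injective.ne_iff).mp h.2.2.1, (σ.injective.ne_iff).mp h.2.2.2.1, (σ.injective.ne_iff).mp h.2.2.2.2.1, (σ.injective.ne_iff).mp h.2.2.2.2.2⟩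
  · exact ⟨6, 3, by decide, by decide, (σ.injective.ne_iff).mp h.1, (σ.injective.ne_iff).mp h.2.1, (σ.injective.ne_iff).mp h.2.2.1, (σ.injective.ne_iff).mp h.2.2.2.1, (σ.injective.ne_iff).mp h.2.2.2.2.1, (σ.injective.ne_iff).mp h.2.2.2.2.2⟩
  · exact ⟨7, 3, by decide, by decide, (σ.injective.ne_iff).mp h.1, (σ.injective.ne_iff).mp h.2.1, (σ.injective.ne_iff).mp h.2.2.1, (σ.injective.ne_iff).mp h.2.2.2.1, (σ.injective.ne_iff).mp h.2.2.2.2.1, (σ.injective.ne_iff).mp h.2.2.2.2.2⟩
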